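/- Let a > b > 0, c² = a² − b², δ = √(a⁴ − a²b² + b⁴), and let ρ = 2(δ − b²)(a² − δ)/c⁴. Then (a/b)² = (ρ² + 2(ρ+1)√(1−2ρ) + 2)/(ρ(ρ+4)), i.e., a/b = √[(ρ² + 2(ρ+1)√(1−2ρ) + 2)/(ρ(ρ+4))]. -/

import Mathlib

theorem stmt_9 (a b c δ ρ : ℝ) (hab : a > b) (hb : b > 0)
    (hc : c > 0) (hc2 : c^2 = a^2 - b^2)
    (hδ : δ = Real.sqrt (a^4 - a^2*b^2 + b^4))
    (hρ : ρ = 2*(δ - b^2)*(a^2 - δ) / c^4) :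
    (a / b)^2 = (ρ^2 + 2*(ρ + 1) * Real.sqrt (1 - 2*ρ) + 2) / (ρ * (ρ + 4)) ∧
    a / b = Real.sqrt ((ρ^2 + 2*(ρ + 1) * Real.sqrt (1 - 2*ρ) + 2) / (ρ * (ρ + 4))) := by
  have ha : a > 0 := lt_trans hb hab
  have hd : a^2 - b^2 > 0 := by nlinarith
  have hδ2 : δ^2 = a^4 - a^2*b^2 + b^4 := by
    rw [hδ, Real.sq_sqrt]; nlinarith [sq_nonneg (a^2 - b^2)]
  have hδ0 : δ ≥ 0 := by rw [hδ]; exact Real.sqrt_nonneg _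
  have hδb : δ > b^2 := by nlinarith
  have hδa : δ < a^2 := by
    have h1 : (a^2 - δ)*(a^2 + δ) = b^2*(a^2 - b^2) := by linear_combination -hδ2
    have h1' : (a^2 - δ)*(a^2 + δ) > 0 := by rw [h1]; positivity
    have h2 : a^2 + δ > 0 := by positivity
    nlinarith [h1', h2]
  have hc4 : c^4 = (a^2 - b^2)^2 := by rw [show c^4 = (c^2)^2 by ring, hc2]
  have hρ' : ρ = 2*(δ - b^2)*(a^2 - δ) / (a^2 - b^2)^2 := by rw [hρ, hc4]
  have hρpos : ρ > 0 := by
    rw [hρ']; apply div_pos (by nlinarith) (by positivity)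
  have hs2 : 2*δ - a^2 - b^2 > 0 := by nlinarith [sq_nonneg (a^2 - b^2)]
  have hsq : Real.sqrt (1 - 2*ρ) = (2*δ - a^2 - b^2)/(a^2 - b^2) := by
    rw [show 1 - 2*ρ = ((2*δ - a^2 - b^2)/(a^2 - b^2))^2 by
      rw [hρ']; field_simp; nlinarith [hδ2]]
    exact Real.sqrt_sq (by positivity)
  have hd2 : (a^2 - b^2) ≠ 0 := ne_of_gt hd
  have keyN : (2*(δ - b^2)*(a^2 - δ))^2
      + 2*(2*(δ - b^2)*(a^2 - δ) + (a^2 - b^2)^2)*((2*δ - a^2 - b^2)*(a^2 - b^2))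
      + 2*(a^2 - b^2)^4 = 4*a^4*(2*δ - a^2 - b^2)^2 := by
    linear_combination (4*δ^2 - 16*a^2*δ + 4*a^4 + 12*a^2*b^2 - 4*b^4) * hδ2
  have keyD : (2*(δ - b^2)*(a^2 - δ)) * (2*(δ - b^2)*(a^2 - δ) + 4*(a^2 - b^2)^2)
      = 4*a^2*b^2*(2*δ - a^2 - b^2)^2 := by
    linear_combination (4*δ^2 - 8*(a^2+b^2)*δ + 12*a^2*b^2) * hδ2
  have hNval : ρ^2 + 2*(ρ + 1) * ((2*δ - a^2 - b^2)/(a^2 - b^2)) + 2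
      = 4*a^4*(2*δ - a^2 - b^2)^2/(a^2 - b^2)^4 := by
    rw [← keyN, hρ']; field_simp
  have hDval : ρ * (ρ + 4) = 4*a^2*b^2*(2*δ - a^2 - b^2)^2/(a^2 - b^2)^4 := by
    have e : ρ * (ρ + 4) = (2*(δ - b^2)*(a^2 - δ) * (2*(δ - b^2)*(a^2 - δ)
        + 4*(a^2 - b^2)^2))/(a^2 - b^2)^4 := by
      rw [hρ']; field_simp
    rw [e, keyD]
  have hT : (2*δ - a^2 - b^2) ≠ 0 := ne_of_gt hs2
  have h1 : (a / b)^2 = (ρ^2 + 2*(ρ + 1) * Real.sqrt (1 - 2*ρ) + 2) / (ρ * (ρ + 4)) := by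
    rw [hsq, hNval, hDval]
    field_simp
  refine ⟨h1, ?_⟩
  rw [← h1, Real.sqrt_sq (by positivity)]
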